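/- For every x ∈ ℂ⁴ with x ≠ 0, q(x) = 0 and f0(x) = 0, the two gradient vectors ∇q(x) and ∇f0(x) are linearly independent over ℂ (equivalently, the 2×4 Jacobian matrix of (q, f0) at x has rank 2). Hence the curve C8 = {q = 0, f0 = 0} in ℙ³(ℂ) is smooth. -/

import Mathlib

open MvPolynomial

noncomputable def q : MvPolynomial (Fin 4) ℂ := X 0 ^ 2 + X 1 ^ 2 + X 2 ^ 2 + X 3 ^ 2
noncomputable def f0 : MvPolynomial (Fin 4) ℂ := X 0 ^ 4 + X 1 ^ 4 + X 2 ^ 4 + X 3 ^ 4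

/-- The gradient of a polynomial at a point. -/
noncomputable def grad (F : MvPolynomial (Fin 4) ℂ) (x : Fin 4 → ℂ) : Fin 4 → ℂ :=
  fun i => eval x (pderiv i F)

theorem stmt12 (x : Fin 4 → ℂ) (hx : x ≠ 0)
    (hq : eval x q = 0) (hf0 : eval x f0 = 0) :
    LinearIndependent ℂ ![grad q x, grad f0 x] := by
  rw [LinearIndependent.pair_iff]
  intro a b hab
  have hg1 : grad q x = fun i => 2 * x i := by
    funext i; fin_cases i <;> simp [grad, q]
  have hg2 : grad f0 x = fun i => 4 * x i ^ 3 := by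
    funext i; fin_cases i <;> simp [grad, f0] <;> ring
  rw [hg1, hg2] at hab
  have h : ∀ i, 2 * a * x i + 4 * b * x i ^ 3 = 0 := by
    intro i
    have := congrFun hab i
    simp only [Pi.add_apply, Pi.smul_apply, smul_eq_mul, Pi.zero_apply] at this
    linear_combination this
  obtain ⟨i₀, hi₀⟩ : ∃ i, x i ≠ 0 := by
    by_contra hcon
    push_neg at hcon
    exact hx (funext hcon)
  have hq' : x 0 ^ 2 + x 1 ^ 2 + x 2 ^ 2 + x 3 ^ 2 = 0 := by simpa [q] using hq
  have hb : b = 0 := by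
    by_contra hb
    set c : ℂ := -a / (2 * b) with hc_def
    have ha : a = -(2 * b) * c := by
      rw [hc_def, mul_div_assoc', eq_div_iff (mul_ne_zero two_ne_zero hb)]; ring
    have hsq : ∀ i, x i ^ 2 = 0 ∨ x i ^ 2 = c := by
      intro i
      have hi := h i
      have hfac : (2 * x i) * (a + 2 * b * x i ^ 2) = 0 := by linear_combination hi
      rcases mul_eq_zero.mp hfac with h' | h'
      · left
        have hx0 : x i = 0 := by
          rcases mul_eq_zero.mp h' with h'' | h''
          · exact absurd h'' two_ne_zero
          · exact h''
        rw [hx0]; ring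
      · right
        rw [hc_def, eq_div_iff (mul_ne_zero two_ne_zero hb)]
        linear_combination h'
    have hc : c ≠ 0 := by
      intro h0
      apply hx
      funext i
      rcases hsq i with h' | h'
      · exact pow_eq_zero_iff two_ne_zero |>.mp h'
      · rw [h0] at h'
        exact pow_eq_zero_iff two_ne_zero |>.mp h'
    rcases hsq 0 with h0 | h0 <;> rcases hsq 1 with h1 | h1 <;>
      rcases hsq 2 with h2 | h2 <;> rcases hsq 3 with h3 | h3 <;>
      rw [h0, h1, h2, h3] at hq' <;>
      first
        | exact hc (by linear_combination hq')
        | exact hc (by linear_combination hq' / 2)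
        | exact hc (by linear_combination hq' / 3)
        | exact hc (by linear_combination hq' / 4)
        | (apply hx; funext i; fin_cases i <;>
            [exact pow_eq_zero_iff two_ne_zero |>.mp h0;
             exact pow_eq_zero_iff two_ne_zero |>.mp h1;
             exact pow_eq_zero_iff two_ne_zero |>.mp h2;
             exact pow_eq_zero_iff two_ne_zero |>.mp h3])
  refine ⟨?_, hb⟩
  have hi := h i₀
  rw [hb] at hi
  have : 2 * a * x i₀ = 0 := by linear_combination hi
  rcases mul_eq_zero.mp this with h' | h'
  · rcases mul_eq_zero.mp h' with h'' | h''
    · exact absurd h'' two_ne_zero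
    · exact h''
  · exact absurd h' hi₀
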